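/- Define A_{2n} = ((-1)^n (4n+1) / 2^(2n-1)) * Σ_{k=0}^{n} C(2n, n-k) * C(2n+2k, 2k) * C(1/2, k+1). Then for every non-negative integer n, A_{2n} = (2(4n+1)/π) * ∫_{-1}^{1} sqrt(1 - z^2) * P_{2n}(z) dz, where P_{2n} is the Legendre polynomial of degree 2n. -/

import Mathlib

/-- Generalized binomial coefficient `C(r, j) = r(r-1)⋯(r-j+1)/j!`. -/
noncomputable def genChoose (r : ℝ) (j : ℕ) : ℝ :=
  (∏ i ∈ Finset.range j, (r - i)) / (Nat.factorial j)

/-- The `n`-th Legendre polynomial via the Rodrigues formula,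
normalized so that `legendre n` evaluates to `1` at `1`. -/
noncomputable def legendre (n : ℕ) : Polynomial ℝ :=
  Polynomial.C (1 / (2 ^ n * (Nat.factorial n) : ℝ)) *
    Polynomial.derivative^[n] ((Polynomial.X ^ 2 - 1) ^ n)

/-- The coefficient `A_{2n}` from Theorem 1. -/
noncomputable def A (n : ℕ) : ℝ :=
  ((-1) ^ n * (4 * n + 1) / (2 : ℝ) ^ (2 * (n : ℤ) - 1)) *
    ∑ k ∈ Finset.range (n + 1),
      (Nat.choose (2 * n) (n - k) : ℝ) * (Nat.choose (2 * n + 2 * k) (2 * k) : ℝ) *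
        genChoose (1 / 2) (k + 1)

open Real intervalIntegral Polynomial Finset

private lemma cos_pow_even' (m : ℕ) :
    (∫ x in (0:ℝ)..π, Real.cos x ^ (2 * m)) =
      π * ∏ i ∈ Finset.range m, (2 * (i : ℝ) + 1) / (2 * i + 2) := by
  induction m with
  | zero => simp
  | succ k ih =>
    rw [Finset.prod_range_succ_comm, mul_left_comm, ← ih, Nat.mul_succ, integral_cos_pow]
    norm_cast
    simp [-Nat.cast_add]

private lemma moment_subst (k : ℕ) :
    (∫ z in (-1:ℝ)..1, z ^ (2*k) * Real.sqrt (1 - z ^ 2)) =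
      ∫ x in (0:ℝ)..π, Real.cos x ^ (2*k) * Real.sin x ^ 2 := by
  have h : ∀ x ∈ Set.uIcc (0:ℝ) π, HasDerivAt Real.cos (-Real.sin x) x :=
    fun x _ => Real.hasDerivAt_cos x
  have hg : Continuous fun z : ℝ => z ^ (2*k) * Real.sqrt (1 - z ^ 2) := by
    fun_prop
  have H := integral_comp_smul_deriv h (by fun_prop) hg
  simp only [Real.cos_zero, Real.cos_pi, smul_eq_mul] at H
  rw [intervalIntegral.integral_symm (-1:ℝ) 1] at H
  have H2 : (∫ z in (-1:ℝ)..1, z ^ (2*k) * Real.sqrt (1 - z ^ 2)) =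
      -∫ x in (0:ℝ)..π, -Real.sin x *
        ((fun z : ℝ => z ^ (2*k) * Real.sqrt (1 - z ^ 2)) ∘ Real.cos) x := by
    linarith [H]
  rw [H2, ← intervalIntegral.integral_neg]
  apply intervalIntegral.integral_congr
  intro x hx
  rw [Set.uIcc_of_le Real.pi_pos.le] at hx
  have hs : 0 ≤ Real.sin x := Real.sin_nonneg_of_nonneg_of_le_pi hx.1 hx.2
  have h2 : Real.sqrt (1 - Real.cos x ^ 2) = Real.sin x := by
    rw [show (1:ℝ) - Real.cos x ^ 2 = Real.sin x ^ 2 by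
      rw [Real.sin_sq x]]
    exact Real.sqrt_sq hs
  simp only [Function.comp_apply, h2]
  ring

private lemma genChoose_succ (r : ℝ) (j : ℕ) :
    genChoose r (j + 1) = genChoose r j * ((r - j) / (j + 1)) := by
  unfold genChoose
  rw [Finset.prod_range_succ, Nat.factorial_succ, Nat.cast_mul]
  have h1 : ((Nat.factorial j : ℝ)) ≠ 0 := Nat.cast_ne_zero.mpr (Nat.factorial_ne_zero j)
  have h2 : ((j:ℝ) + 1) ≠ 0 := by positivity
  field_simp
  push_cast
  try ring
  try exact Or.inl trivial

private lemma gen_id (k : ℕ) :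
    (∏ i ∈ Finset.range k, (2 * (i:ℝ) + 1) / (2 * i + 2)) / (2 * k + 2) =
      (-1) ^ k * genChoose (1/2) (k + 1) := by
  induction k with
  | zero => norm_num [genChoose]
  | succ k ih =>
    rw [Finset.prod_range_succ, genChoose_succ, pow_succ]
    push_cast
    have h1 : (2*(k:ℝ)+2) ≠ 0 := by positivity
    have h2 : (2*(k:ℝ)+4) ≠ 0 := by positivity
    have h3 : ((k:ℝ)+2) ≠ 0 := by positivity
    have : (∏ i ∈ Finset.range k, (2 * (i:ℝ) + 1) / (2 * i + 2)) =
        ((-1) ^ k * genChoose (1/2) (k + 1)) * (2 * k + 2) := by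
      rw [← ih]; field_simp
    rw [this]
    field_simp
    ring

private lemma moment (k : ℕ) :
    (∫ z in (-1:ℝ)..1, z ^ (2*k) * Real.sqrt (1 - z ^ 2)) =
      π * ((-1)^k * genChoose (1/2) (k+1)) := by
  rw [moment_subst]
  have h1 : (∫ x in (0:ℝ)..π, Real.cos x ^ (2*k) * Real.sin x ^ 2) =
      (∫ x in (0:ℝ)..π, Real.cos x ^ (2*k)) - ∫ x in (0:ℝ)..π, Real.cos x ^ (2*(k+1)) := by
    rw [← intervalIntegral.integral_sub]
    · apply intervalIntegral.integral_congr
      intro x _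
      have := Real.sin_sq_add_cos_sq x
      have h2 : Real.sin x ^ 2 = 1 - Real.cos x ^ 2 := by linarith
      simp only []
      rw [h2]
      ring
    · exact (Continuous.intervalIntegrable (by fun_prop) _ _)
    · exact (Continuous.intervalIntegrable (by fun_prop) _ _)
  rw [h1, cos_pow_even', cos_pow_even', ← gen_id, Finset.prod_range_succ]
  have h2 : (2*(k:ℝ)+2) ≠ 0 := by positivity
  field_simp
  ring

private lemma expand_pow (n : ℕ) :
    ((X:ℝ[X]) ^ 2 - 1) ^ (2*n) =
      ∑ j ∈ range (2*n+1), Polynomial.C ((-1:ℝ)^(j+2*n) * ((2*n).choose j)) * X ^ (2*j) := by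
  rw [sub_pow]
  apply Finset.sum_congr rfl
  intro j _
  rw [← pow_mul]
  simp [mul_comm, mul_assoc, mul_left_comm]

private lemma iter_deriv (n : ℕ) :
    Polynomial.derivative^[2*n] (((X:ℝ[X]) ^ 2 - 1) ^ (2*n)) =
      ∑ j ∈ range (2*n+1),
        Polynomial.C ((-1:ℝ)^(j+2*n) * ((2*n).choose j) * ((2*j).descFactorial (2*n))) *
          X ^ (2*j - 2*n) := by
  rw [expand_pow, iterate_derivative_sum]
  apply Finset.sum_congr rfl
  intro j _
  rw [iterate_derivative_C_mul, iterate_derivative_X_pow_eq_C_mul, ← mul_assoc, ← C_mul]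

private lemma legendre_eval (n : ℕ) (z : ℝ) :
    (legendre (2*n)).eval z = ∑ k ∈ Finset.range (n+1),
      ((-1:ℝ)^(n+k) * ((2*n).choose (n-k)) * ((2*n+2*k).choose (2*k)) / 2^(2*n)) * z^(2*k) := by
  unfold legendre
  rw [iter_deriv, eval_mul, eval_C, eval_finset_sum]
  have hsplit : (2*n+1) = n + (n+1) := by ring
  rw [hsplit, Finset.sum_range_add]
  have h0 : ∀ j ∈ range n,
      eval z (Polynomial.C ((-1:ℝ)^(j+2*n) * ((2*n).choose j) * ((2*j).descFactorial (2*n))) *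
        X ^ (2*j - 2*n)) = 0 := by
    intro j hj
    rw [Finset.mem_range] at hj
    have : (2*j).descFactorial (2*n) = 0 := by
      rw [Nat.descFactorial_eq_zero_iff_lt]; omega
    simp [this]
  rw [Finset.sum_congr rfl h0, Finset.sum_const_zero, zero_add, Finset.mul_sum]
  apply Finset.sum_congr rfl
  intro k hk
  rw [Finset.mem_range] at hk
  have hk' : k ≤ n := by omega
  rw [eval_mul, eval_C, eval_pow, eval_X]
  have he : 2*(n+k) - 2*n = 2*k := by omega
  have hd : ((2*(n+k)).descFactorial (2*n) : ℝ) =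
      (Nat.factorial (2*n)) * ((2*n+2*k).choose (2*k)) := by
    rw [Nat.descFactorial_eq_factorial_mul_choose]
    have : (2*(n+k)).choose (2*n) = (2*n+2*k).choose (2*k) := by
      rw [show 2*(n+k) = 2*n+2*k by ring]
      rw [← Nat.choose_symm (by omega)]
      congr 1
      omega
    rw [this]
    push_cast
    ring
  have hc : ((2*n).choose (n+k) : ℝ) = ((2*n).choose (n-k) : ℝ) := by
    congr 1
    rw [← Nat.choose_symm (show n+k ≤ 2*n by omega)]
    congr 1
    omega
  have hsgn : ((-1:ℝ))^(n+k+2*n) = (-1:ℝ)^(n+k) := by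
    rw [pow_add]
    simp [pow_mul]
  rw [he, hd, hc, hsgn]
  have hfac : ((2*n).factorial : ℝ) ≠ 0 := Nat.cast_ne_zero.mpr (Nat.factorial_ne_zero _)
  have h2 : ((2:ℝ))^(2*n) ≠ 0 := by positivity
  field_simp

theorem stmt_3 (n : ℕ) :
    A n = (2 * (4 * n + 1) / Real.pi) *
      ∫ z in (-1:ℝ)..1, Real.sqrt (1 - z ^ 2) * (legendre (2 * n)).eval z := by
  have hinteg : (∫ z in (-1:ℝ)..1, Real.sqrt (1 - z ^ 2) * (legendre (2 * n)).eval z) =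
      ∑ k ∈ Finset.range (n+1),
        ((-1:ℝ)^(n+k) * ((2*n).choose (n-k)) * ((2*n+2*k).choose (2*k)) / 2^(2*n)) *
          (π * ((-1)^k * genChoose (1/2) (k+1))) := by
    have h1 : (∫ z in (-1:ℝ)..1, Real.sqrt (1 - z ^ 2) * (legendre (2 * n)).eval z) =
        ∫ z in (-1:ℝ)..1, ∑ k ∈ Finset.range (n+1),
          ((-1:ℝ)^(n+k) * ((2*n).choose (n-k)) * ((2*n+2*k).choose (2*k)) / 2^(2*n)) *
            (z^(2*k) * Real.sqrt (1 - z ^ 2)) := by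
      apply intervalIntegral.integral_congr
      intro z _
      simp only []
      rw [legendre_eval, Finset.mul_sum]
      apply Finset.sum_congr rfl
      intro k _
      ring
    rw [h1, intervalIntegral.integral_finset_sum]
    · apply Finset.sum_congr rfl
      intro k _
      rw [intervalIntegral.integral_const_mul, moment]
    · intro k _
      exact Continuous.intervalIntegrable (by fun_prop) _ _
  rw [hinteg, Finset.mul_sum]
  unfold A
  rw [Finset.mul_sum]
  apply Finset.sum_congr rfl
  intro k _
  have hpi : Real.pi ≠ 0 := Real.pi_ne_zero
  have hz : ((2:ℝ)) ^ (2 * (n:ℤ) - 1) = 2^(2*n) / 2 := by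
    rw [zpow_sub₀ (by norm_num : (2:ℝ) ≠ 0)]
    norm_num
    rw [show (2 * (n:ℤ)) = ((2*n : ℕ) : ℤ) by push_cast; ring, zpow_natCast]
  rw [hz]
  have h2 : ((2:ℝ))^(2*n) ≠ 0 := by positivity
  have hsgn : ((-1:ℝ))^(n+k) * (-1)^k = (-1)^n := by
    rw [pow_add, mul_assoc, ← pow_add, ← two_mul, pow_mul]
    norm_num
  field_simp
  ring_nf
  have h4 : ((-1:ℝ))^(k*2) = 1 := by
    rw [mul_comm, pow_mul]; norm_num
  rw [h4]
  ring
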